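/- Define recursively the 2^n × 2^n matrices over k[x₀,…,x_n,y₀,…,y_n] by φ₀ = (x₀), ψ₀ = (y₀), and φ_n = [[x_n, φ_{n−1}],[ψ_{n−1}, −y_n]], ψ_n = [[y_n, φ_{n−1}],[ψ_{n−1}, −x_n]]. Then φ_n·ψ_n = ψ_n·φ_n = (Σ_{i=0}^n xᵢyᵢ)·Id_{2^n}. -/

import Mathlib

noncomputable section
open MvPolynomial

/-- Index type of size `2^n` for the Knörrer matrices. -/
def KIdx : ℕ → Type
  | 0 => Unit
  | n + 1 => KIdx n ⊕ KIdx n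

def kIdxFintype : (n : ℕ) → Fintype (KIdx n)
  | 0 => inferInstanceAs (Fintype Unit)
  | n + 1 => letI := kIdxFintype n; inferInstanceAs (Fintype (KIdx n ⊕ KIdx n))

instance (n : ℕ) : Fintype (KIdx n) := kIdxFintype n

def kIdxDecEq : (n : ℕ) → DecidableEq (KIdx n)
  | 0 => inferInstanceAs (DecidableEq Unit)
  | n + 1 => letI := kIdxDecEq n; inferInstanceAs (DecidableEq (KIdx n ⊕ KIdx n))

instance (n : ℕ) : DecidableEq (KIdx n) := kIdxDecEq n

/-- The polynomial ring `k[x₀,x₁,…,y₀,y₁,…]`: `X (inl i) = xᵢ`, `X (inr i) = yᵢ`. -/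
abbrev KRing (k : Type*) [CommRing k] := MvPolynomial (ℕ ⊕ ℕ) k

variable (k : Type*) [CommRing k]

mutual
/-- The Knörrer matrix `φ_n`. -/
noncomputable def knPhi : (n : ℕ) → Matrix (KIdx n) (KIdx n) (KRing k)
  | 0 => fun _ _ => X (Sum.inl 0)
  | n + 1 =>
    Matrix.fromBlocks ((X (Sum.inl (n + 1)) : KRing k) • 1) (knPhi n) (knPsi n)
      (-((X (Sum.inr (n + 1)) : KRing k) • 1))
/-- The Knörrer matrix `ψ_n`. -/
noncomputable def knPsi : (n : ℕ) → Matrix (KIdx n) (KIdx n) (KRing k)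
  | 0 => fun _ _ => X (Sum.inr 0)
  | n + 1 =>
    Matrix.fromBlocks ((X (Sum.inr (n + 1)) : KRing k) • 1) (knPhi n) (knPsi n)
      (-((X (Sum.inl (n + 1)) : KRing k) • 1))
end

lemma card0 : Fintype.card (KIdx 0) = 1 := rfl

/-- the recursively defined `2^n × 2^n` Knörrer matrices satisfy
`φ_n·ψ_n = ψ_n·φ_n = (Σ_{i=0}^n xᵢyᵢ)·Id`. -/
theorem stmt_16 (n : ℕ) :
    knPhi k n * knPsi k n =
      (∑ i ∈ Finset.range (n + 1), (X (Sum.inl i) * X (Sum.inr i) : KRing k)) •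
        (1 : Matrix (KIdx n) (KIdx n) (KRing k)) ∧
    knPsi k n * knPhi k n =
      (∑ i ∈ Finset.range (n + 1), (X (Sum.inl i) * X (Sum.inr i) : KRing k)) •
        (1 : Matrix (KIdx n) (KIdx n) (KRing k)) := by
  induction n with
  | zero =>
    constructor <;>
    · ext i j : 1
      obtain rfl : i = j := rfl
      rw [Matrix.mul_apply, Matrix.smul_apply, Matrix.one_apply_eq]
      simp [knPhi, knPsi, Matrix.mul_apply, Matrix.smul_apply, card0, mul_comm]
  | succ n ih =>
    obtain ⟨h1, h2⟩ := ih
    have hsum : (∑ i ∈ Finset.range (n + 1 + 1), (X (Sum.inl i) * X (Sum.inr i) : KRing k))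
        = (∑ i ∈ Finset.range (n + 1), (X (Sum.inl i) * X (Sum.inr i) : KRing k))
          + X (Sum.inl (n+1)) * X (Sum.inr (n+1)) := Finset.sum_range_succ _ _
    constructor
    · refine (?_ : (Matrix.fromBlocks ((X (Sum.inl (n + 1)) : KRing k) • 1) (knPhi k n) (knPsi k n) (-((X (Sum.inr (n + 1)) : KRing k) • 1)) * Matrix.fromBlocks ((X (Sum.inr (n + 1)) : KRing k) • 1) (knPhi k n) (knPsi k n) (-((X (Sum.inl (n + 1)) : KRing k) • 1)) : Matrix (KIdx n ⊕ KIdx n) (KIdx n ⊕ KIdx n) (KRing k)) = (∑ i ∈ Finset.range (n + 1 + 1), (X (Sum.inl i) * X (Sum.inr i) : KRing k)) • (1 : Matrix (KIdx n ⊕ KIdx n) (KIdx n ⊕ KIdx n) (KRing k)))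
      rw [Matrix.fromBlocks_multiply, hsum, ← Matrix.fromBlocks_one,
        Matrix.fromBlocks_smul, h1, h2]
      simp only [Matrix.neg_mul, Matrix.mul_neg, Matrix.smul_mul, Matrix.mul_smul,
        Matrix.one_mul, Matrix.mul_one, neg_neg, smul_neg, smul_zero, add_smul,
        smul_smul]
      rw [Matrix.fromBlocks_inj]
      refine ⟨by rw [mul_comm]; abel, by abel, by abel, by rw [mul_comm]⟩
    · refine (?_ : (Matrix.fromBlocks ((X (Sum.inr (n + 1)) : KRing k) • 1) (knPhi k n) (knPsi k n) (-((X (Sum.inl (n + 1)) : KRing k) • 1)) * Matrix.fromBlocks ((X (Sum.inl (n + 1)) : KRing k) • 1) (knPhi k n) (knPsi k n) (-((X (Sum.inr (n + 1)) : KRing k) • 1)) : Matrix (KIdx n ⊕ KIdx n) (KIdx n ⊕ KIdx n) (KRing k)) = (∑ i ∈ Finset.range (n + 1 + 1), (X (Sum.inl i) * X (Sum.inr i) : KRing k)) • (1 : Matrix (KIdx n ⊕ KIdx n) (KIdx n ⊕ KIdx n) (KRing k)))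
      rw [Matrix.fromBlocks_multiply, hsum, ← Matrix.fromBlocks_one,
        Matrix.fromBlocks_smul, h1, h2]
      simp only [Matrix.neg_mul, Matrix.mul_neg, Matrix.smul_mul, Matrix.mul_smul,
        Matrix.one_mul, Matrix.mul_one, neg_neg, smul_neg, smul_zero, add_smul,
        smul_smul]
      rw [Matrix.fromBlocks_inj]
      refine ⟨by rw [mul_comm]; abel, by abel, by abel, by rw [mul_comm]⟩
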